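/- For every irrational x ∈ (0,1) and every integer n ≥ 1, x lies strictly between the n-th principal convergent and the n-th pseudo-convergent of its odd-odd continued fraction: (x − p_n/q_n)·(x − p''_n/q''_n) < 0 (here q_n and q''_n are positive). -/

import Mathlib

/-- The odd-odd continued fraction map on `[0,1]`.  For `x ∈ [(k-1)/k, k/(k+1))` with `k ≥ 1`
one has `k = ⌊1/(1-x)⌋`, and the two branches are separated by `(2k-1)/(2k+1)`. -/
noncomputable def oocfT (x : ℝ) : ℝ :=
  if x = 1 then 1
  else if x < (2 * (⌊1 / (1 - x)⌋ : ℝ) - 1) / (2 * (⌊1 / (1 - x)⌋ : ℝ) + 1) then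
    ((⌊1 / (1 - x)⌋ : ℝ) * x - ((⌊1 / (1 - x)⌋ : ℝ) - 1)) /
      ((⌊1 / (1 - x)⌋ : ℝ) - ((⌊1 / (1 - x)⌋ : ℝ) + 1) * x)
  else
    ((⌊1 / (1 - x)⌋ : ℝ) - ((⌊1 / (1 - x)⌋ : ℝ) + 1) * x) /
      ((⌊1 / (1 - x)⌋ : ℝ) * x - ((⌊1 / (1 - x)⌋ : ℝ) - 1))

/-- OOCF partial quotient `a` of a point `y`: `a = k+1` if `y` is in the lower branch
interval `((k-1)/k, (2k-1)/(2k+1))`, and `a = k` if `y ∈ ((2k-1)/(2k+1), k/(k+1))`,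
where `k = ⌊1/(1-y)⌋`. -/
noncomputable def oocfA (y : ℝ) : ℤ :=
  if y < (2 * (⌊1 / (1 - y)⌋ : ℝ) - 1) / (2 * (⌊1 / (1 - y)⌋ : ℝ) + 1) then ⌊1 / (1 - y)⌋ + 1
  else ⌊1 / (1 - y)⌋

/-- OOCF partial quotient `ε` of a point `y`: `ε = -1` on the lower branch interval and
`ε = 1` on the upper one. -/
noncomputable def oocfE (y : ℝ) : ℤ :=
  if y < (2 * (⌊1 / (1 - y)⌋ : ℝ) - 1) / (2 * (⌊1 / (1 - y)⌋ : ℝ) + 1) then -1 else 1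

/-- The OOCF convergents `(p'_n, q'_n, p_n, q_n)` of `x`, defined by
`p'_0 = 1, q'_0 = 0, p_0 = 1, q_0 = 1` and
`p'_n = a_n p_{n-1} - p'_{n-1}`, `q'_n = a_n q_{n-1} - q'_{n-1}`,
`p_n = 2 p'_n + ε_n p_{n-1}`, `q_n = 2 q'_n + ε_n q_{n-1}`,
where `(a_n, ε_n)` are the partial quotients of `x`, i.e. `a_n = oocfA (oocfT^[n-1] x)`,
`ε_n = oocfE (oocfT^[n-1] x)`. -/
noncomputable def oocfConv (x : ℝ) : ℕ → ℤ × ℤ × ℤ × ℤ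
  | 0 => (1, 0, 1, 1)
  | n + 1 =>
    let c := oocfConv x n
    (oocfA (oocfT^[n] x) * c.2.2.1 - c.1,
     oocfA (oocfT^[n] x) * c.2.2.2 - c.2.1,
     2 * (oocfA (oocfT^[n] x) * c.2.2.1 - c.1) + oocfE (oocfT^[n] x) * c.2.2.1,
     2 * (oocfA (oocfT^[n] x) * c.2.2.2 - c.2.1) + oocfE (oocfT^[n] x) * c.2.2.2)

/-- `n`-th sub-convergent numerator `p'_n`. -/
noncomputable def oocfP' (x : ℝ) (n : ℕ) : ℤ := (oocfConv x n).1

/-- `n`-th sub-convergent denominator `q'_n`. -/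
noncomputable def oocfQ' (x : ℝ) (n : ℕ) : ℤ := (oocfConv x n).2.1

/-- `n`-th principal convergent numerator `p_n`. -/
noncomputable def oocfP (x : ℝ) (n : ℕ) : ℤ := (oocfConv x n).2.2.1

/-- `n`-th principal convergent denominator `q_n`. -/
noncomputable def oocfQ (x : ℝ) (n : ℕ) : ℤ := (oocfConv x n).2.2.2

/-- `n`-th pseudo-convergent numerator: `p''_n = p'_n + ε_n p_{n-1}` for `n ≥ 1`
(with the convention `p''_0 = 0`). -/
noncomputable def oocfP'' (x : ℝ) : ℕ → ℤ
  | 0 => 0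
  | n + 1 => oocfP' x (n + 1) + oocfE (oocfT^[n] x) * oocfP x n

/-- `n`-th pseudo-convergent denominator: `q''_n = q'_n + ε_n q_{n-1}` for `n ≥ 1`
(with the convention `q''_0 = 1`). -/
noncomputable def oocfQ'' (x : ℝ) : ℕ → ℤ
  | 0 => 1
  | n + 1 => oocfQ' x (n + 1) + oocfE (oocfT^[n] x) * oocfQ x n

lemma oocf_step (y : ℝ) (hy0 : 0 < y) (hy1 : y < 1) (hirr : Irrational y) :
    (0 < oocfT y ∧ oocfT y < 1) ∧ Irrational (oocfT y) ∧
    1 ≤ oocfA y ∧ 1 ≤ oocfA y + oocfE y ∧ oocfE y * oocfE y = 1 ∧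
    y * ((oocfA y : ℝ) * oocfT y + (oocfA y : ℝ) + (oocfE y : ℝ)) =
      ((oocfA y : ℝ) - 1) * oocfT y + ((oocfA y : ℝ) - 1 + (oocfE y : ℝ)) := by
  have hy1' : (0:ℝ) < 1 - y := by linarith
  set k : ℤ := ⌊1 / (1 - y)⌋ with hkdef
  have hr1 : (1:ℝ) < 1 / (1 - y) := (one_lt_div hy1').mpr (by linarith)
  have hk1 : 1 ≤ k := Int.le_floor.mpr (by exact_mod_cast hr1.le)
  have hkR : (1:ℝ) ≤ (k:ℝ) := by exact_mod_cast hk1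
  have hfl : (k:ℝ) ≤ 1 / (1 - y) := Int.floor_le _
  have hfu : 1 / (1 - y) < (k:ℝ) + 1 := by
    have := Int.lt_floor_add_one (1 / (1 - y)); push_cast at this; linarith
  have hfl' : (k:ℝ) * (1 - y) ≤ 1 := (le_div_iff₀ hy1').mp hfl
  have hfu' : 1 < ((k:ℝ) + 1) * (1 - y) := (div_lt_iff₀ hy1').mp hfu
  have hN1 : 0 ≤ (k:ℝ) * y - ((k:ℝ) - 1) := by nlinarith
  have hD1 : 0 < (k:ℝ) - ((k:ℝ) + 1) * y := by nlinarith
  have hN1' : 0 < (k:ℝ) * y - ((k:ℝ) - 1) := by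
    rcases hN1.lt_or_eq with h | h
    · exact h
    · exfalso
      have hkne : (k:ℝ) ≠ 0 := by linarith
      have : y = ((((k:ℚ) - 1) / (k:ℚ) : ℚ) : ℝ) := by
        push_cast
        rw [eq_div_iff hkne]; linarith
      exact hirr ⟨_, this.symm⟩
  have hyne1 : y ≠ 1 := by linarith
  have hcrat : y ≠ (2 * (k:ℝ) - 1) / (2 * (k:ℝ) + 1) := by
    intro h
    have : y = (((2 * (k:ℚ) - 1) / (2 * (k:ℚ) + 1) : ℚ) : ℝ) := by
      rw [h]; push_cast; ring
    exact hirr ⟨_, this.symm⟩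
  have hc2 : (0:ℝ) < 2 * (k:ℝ) + 1 := by linarith
  by_cases hcond : y < (2 * (k:ℝ) - 1) / (2 * (k:ℝ) + 1)
  · -- lower branch: ε = -1, a = k+1, T y = N/D
    have hT : oocfT y = ((k:ℝ) * y - ((k:ℝ) - 1)) / ((k:ℝ) - ((k:ℝ) + 1) * y) := by
      rw [oocfT, if_neg hyne1, ← hkdef, if_pos hcond]
    have hA : oocfA y = k + 1 := by rw [oocfA, ← hkdef, if_pos hcond]
    have hE : oocfE y = -1 := by rw [oocfE, ← hkdef, if_pos hcond]
    have hlt : (k:ℝ) * y - ((k:ℝ) - 1) < (k:ℝ) - ((k:ℝ) + 1) * y := by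
      have := (lt_div_iff₀ hc2).mp hcond; nlinarith
    have hT0 : 0 < oocfT y := by rw [hT]; exact div_pos hN1' hD1
    have hT1 : oocfT y < 1 := by rw [hT]; exact (div_lt_one hD1).mpr hlt
    refine ⟨⟨hT0, hT1⟩, ?_, by omega, by omega, by rw [hE]; ring, ?_⟩
    · rintro ⟨q, hq⟩
      rw [hT] at hq
      have hq' : (q:ℝ) * ((k:ℝ) - ((k:ℝ) + 1) * y) = (k:ℝ) * y - ((k:ℝ) - 1) := by
        rw [eq_comm, div_eq_iff hD1.ne'] at hq; linarith [hq]
      have hq0 : (0:ℝ) < q := by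
        rw [hq]; exact div_pos hN1' hD1
      have hden : (0:ℝ) < ((k:ℝ) + 1) * q + k := by nlinarith
      have hyeq : y = (((k:ℚ) * q + k - 1) / (((k:ℚ) + 1) * q + k) : ℚ) := by
        push_cast
        rw [eq_div_iff hden.ne']
        linear_combination -hq'
      exact hirr ⟨_, hyeq.symm⟩
    · rw [hT, hA, hE]
      push_cast
      have hDne := mul_inv_cancel₀ hD1.ne'
      rw [div_eq_mul_inv]
      linear_combination (-(y * (k:ℝ) - ((k:ℝ) - 1))) * hDne
  · -- upper branch: ε = 1, a = k, T y = D/N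
    have hcond' : (2 * (k:ℝ) - 1) / (2 * (k:ℝ) + 1) < y :=
      lt_of_le_of_ne (not_lt.mp hcond) hcrat.symm
    have hT : oocfT y = ((k:ℝ) - ((k:ℝ) + 1) * y) / ((k:ℝ) * y - ((k:ℝ) - 1)) := by
      rw [oocfT, if_neg hyne1, ← hkdef, if_neg hcond]
    have hA : oocfA y = k := by rw [oocfA, ← hkdef, if_neg hcond]
    have hE : oocfE y = 1 := by rw [oocfE, ← hkdef, if_neg hcond]
    have hlt : (k:ℝ) - ((k:ℝ) + 1) * y < (k:ℝ) * y - ((k:ℝ) - 1) := by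
      have := (div_lt_iff₀ hc2).mp hcond'; nlinarith
    have hT0 : 0 < oocfT y := by rw [hT]; exact div_pos hD1 hN1'
    have hT1 : oocfT y < 1 := by rw [hT]; exact (div_lt_one hN1').mpr hlt
    refine ⟨⟨hT0, hT1⟩, ?_, by omega, by omega, by rw [hE]; ring, ?_⟩
    · rintro ⟨q, hq⟩
      rw [hT] at hq
      have hq' : (q:ℝ) * ((k:ℝ) * y - ((k:ℝ) - 1)) = (k:ℝ) - ((k:ℝ) + 1) * y := by
        rw [eq_comm, div_eq_iff hN1'.ne'] at hq; linarith [hq]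
      have hq0 : (0:ℝ) < q := by
        rw [hq]; exact div_pos hD1 hN1'
      have hden : (0:ℝ) < (k:ℝ) * q + k + 1 := by nlinarith
      have hyeq : y = ((((k:ℚ) - 1) * q + k) / ((k:ℚ) * q + k + 1) : ℚ) := by
        push_cast
        rw [eq_div_iff hden.ne']
        linear_combination hq'
      exact hirr ⟨_, hyeq.symm⟩
    · rw [hT, hA, hE]
      push_cast
      have hNne := mul_inv_cancel₀ hN1'.ne'
      rw [div_eq_mul_inv]
      linear_combination (-(y * ((k:ℝ) + 1) - (k:ℝ))) * hNne
lemma oocfP'_succ (x : ℝ) (n : ℕ) :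
    oocfP' x (n+1) = oocfA (oocfT^[n] x) * oocfP x n - oocfP' x n := by
  simp only [oocfP', oocfP, oocfConv]
lemma oocfQ'_succ (x : ℝ) (n : ℕ) :
    oocfQ' x (n+1) = oocfA (oocfT^[n] x) * oocfQ x n - oocfQ' x n := by
  simp only [oocfQ', oocfQ, oocfConv]
lemma oocfP_succ (x : ℝ) (n : ℕ) :
    oocfP x (n+1) = 2 * oocfP' x (n+1) + oocfE (oocfT^[n] x) * oocfP x n := by
  simp only [oocfP', oocfP, oocfConv]
lemma oocfQ_succ (x : ℝ) (n : ℕ) :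
    oocfQ x (n+1) = 2 * oocfQ' x (n+1) + oocfE (oocfT^[n] x) * oocfQ x n := by
  simp only [oocfQ', oocfQ, oocfConv]
lemma oocfP''_succ (x : ℝ) (n : ℕ) :
    oocfP'' x (n+1) = oocfP' x (n+1) + oocfE (oocfT^[n] x) * oocfP x n := by
  simp only [oocfP'']
lemma oocfQ''_succ (x : ℝ) (n : ℕ) :
    oocfQ'' x (n+1) = oocfQ' x (n+1) + oocfE (oocfT^[n] x) * oocfQ x n := by
  simp only [oocfQ'']
lemma oocf_iter (x : ℝ) (hx0 : 0 < x) (hx1 : x < 1) (hirr : Irrational x) (n : ℕ) :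
    (0 < oocfT^[n] x ∧ oocfT^[n] x < 1) ∧ Irrational (oocfT^[n] x) := by
  induction n with
  | zero => exact ⟨⟨hx0, hx1⟩, hirr⟩
  | succ n ih =>
    rw [Function.iterate_succ_apply']
    exact ⟨(oocf_step _ ih.1.1 ih.1.2 ih.2).1, (oocf_step _ ih.1.1 ih.1.2 ih.2).2.1⟩

lemma oocf_inv (x : ℝ) (hx0 : 0 < x) (hx1 : x < 1) (hirr : Irrational x) (n : ℕ) :
    0 ≤ oocfQ' x n ∧ 1 ≤ oocfQ'' x n ∧
    (oocfP' x n * oocfQ'' x n - oocfP'' x n * oocfQ' x n) *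
      (oocfP' x n * oocfQ'' x n - oocfP'' x n * oocfQ' x n) = 1 ∧
    oocfP x n = oocfP' x n + oocfP'' x n ∧
    oocfQ x n = oocfQ' x n + oocfQ'' x n ∧
    x * ((oocfQ' x n : ℝ) * oocfT^[n] x + (oocfQ'' x n : ℝ)) =
      (oocfP' x n : ℝ) * oocfT^[n] x + (oocfP'' x n : ℝ) := by
  induction n with
  | zero =>
    refine ⟨?_, ?_, ?_, ?_, ?_, ?_⟩ <;>
      simp [oocfP, oocfQ, oocfP', oocfQ', oocfP'', oocfQ'', oocfConv]
  | succ n ih =>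
    obtain ⟨hq'0, hq''1, hdet, hp, hq, hinv⟩ := ih
    obtain ⟨⟨hy0, hy1⟩, hyirr⟩ := oocf_iter x hx0 hx1 hirr n
    obtain ⟨_, _, ha1, hae1, he2, hstep⟩ := oocf_step _ hy0 hy1 hyirr
    have hQ' : oocfQ' x (n+1)
        = (oocfA (oocfT^[n] x) - 1) * oocfQ' x n + oocfA (oocfT^[n] x) * oocfQ'' x n := by
      rw [oocfQ'_succ, hq]; ring
    have hQ'' : oocfQ'' x (n+1)
        = (oocfA (oocfT^[n] x) - 1 + oocfE (oocfT^[n] x)) * oocfQ' x n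
          + (oocfA (oocfT^[n] x) + oocfE (oocfT^[n] x)) * oocfQ'' x n := by
      rw [oocfQ''_succ, hQ', hq]; ring
    have hP' : oocfP' x (n+1)
        = (oocfA (oocfT^[n] x) - 1) * oocfP' x n + oocfA (oocfT^[n] x) * oocfP'' x n := by
      rw [oocfP'_succ, hp]; ring
    have hP'' : oocfP'' x (n+1)
        = (oocfA (oocfT^[n] x) - 1 + oocfE (oocfT^[n] x)) * oocfP' x n
          + (oocfA (oocfT^[n] x) + oocfE (oocfT^[n] x)) * oocfP'' x n := by
      rw [oocfP''_succ, hP', hp]; ring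
    set a : ℤ := oocfA (oocfT^[n] x) with hadef
    set e : ℤ := oocfE (oocfT^[n] x) with hedef
    refine ⟨?_, ?_, ?_, ?_, ?_, ?_⟩
    · rw [hQ']; nlinarith
    · rw [hQ'']; nlinarith [mul_nonneg (by omega : (0:ℤ) ≤ a - 1 + e) hq'0]
    · rw [hP', hP'', hQ', hQ'']
      have h2 : ((a - 1) * oocfP' x n + a * oocfP'' x n) * ((a - 1 + e) * oocfQ' x n + (a + e) * oocfQ'' x n) -
          ((a - 1 + e) * oocfP' x n + (a + e) * oocfP'' x n) * ((a - 1) * oocfQ' x n + a * oocfQ'' x n)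
          = -e * (oocfP' x n * oocfQ'' x n - oocfP'' x n * oocfQ' x n) := by ring
      rw [h2]; nlinarith [hdet, he2]
    · rw [oocfP_succ, oocfP''_succ]; ring
    · rw [oocfQ_succ, oocfQ''_succ]; ring
    · rw [hQ', hQ'', hP', hP'', Function.iterate_succ_apply']
      push_cast
      linear_combination ((oocfP' x n : ℝ) - x * (oocfQ' x n : ℝ)) * hstep + ((a:ℝ) * oocfT (oocfT^[n] x) + (a:ℝ) + (e:ℝ)) * hinv
set_option maxHeartbeats 1000000 in
/-- For irrational `x ∈ (0,1)` and `n ≥ 1`, `x` lies strictly between the principal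
convergent `p_n/q_n` and the pseudo-convergent `p''_n/q''_n` (whose denominators are
positive). -/
theorem oocf_x_between_principal_and_pseudo
    (x : ℝ) (hx : x ∈ Set.Ioo (0 : ℝ) 1) (hirr : Irrational x)
    (n : ℕ) (hn : 1 ≤ n) :
    0 < oocfQ x n ∧ 0 < oocfQ'' x n ∧
      (x - (oocfP x n : ℝ) / (oocfQ x n : ℝ)) *
          (x - (oocfP'' x n : ℝ) / (oocfQ'' x n : ℝ)) < 0 := by
  obtain ⟨hx0, hx1⟩ := hx
  obtain ⟨hq'0, hq''1, hdet, hp, hq, hinv⟩ := oocf_inv x hx0 hx1 hirr n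
  obtain ⟨⟨ht0, ht1⟩, -⟩ := oocf_iter x hx0 hx1 hirr n
  set t : ℝ := oocfT^[n] x with htdef
  have hqpos : 0 < oocfQ x n := by omega
  have hq''pos : 0 < oocfQ'' x n := by omega
  refine ⟨hqpos, hq''pos, ?_⟩
  have h1 : (0:ℝ) ≤ (oocfQ' x n : ℝ) := by exact_mod_cast hq'0
  have h2 : (1:ℝ) ≤ (oocfQ'' x n : ℝ) := by exact_mod_cast hq''1
  have hdR : ((oocfP' x n : ℝ) * (oocfQ'' x n : ℝ) - (oocfP'' x n : ℝ) * (oocfQ' x n : ℝ)) *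
      ((oocfP' x n : ℝ) * (oocfQ'' x n : ℝ) - (oocfP'' x n : ℝ) * (oocfQ' x n : ℝ)) = 1 := by
    exact_mod_cast hdet
  have hpR : (oocfP x n : ℝ) = (oocfP' x n : ℝ) + (oocfP'' x n : ℝ) := by exact_mod_cast hp
  have hqRe : (oocfQ x n : ℝ) = (oocfQ' x n : ℝ) + (oocfQ'' x n : ℝ) := by exact_mod_cast hq
  have hqR : (0:ℝ) < (oocfQ x n : ℝ) := by exact_mod_cast hqpos
  have hq''R : (0:ℝ) < (oocfQ'' x n : ℝ) := by exact_mod_cast hq''pos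
  set P' : ℝ := (oocfP' x n : ℝ) with hsP'
  set P'' : ℝ := (oocfP'' x n : ℝ) with hsP''
  set Q' : ℝ := (oocfQ' x n : ℝ) with hsQ'
  set Q'' : ℝ := (oocfQ'' x n : ℝ) with hsQ''
  set P : ℝ := (oocfP x n : ℝ) with hsP
  set Q : ℝ := (oocfQ x n : ℝ) with hsQ
  have hQpos : (0:ℝ) < Q' * t + Q'' := by nlinarith
  have hxeq : x = (P' * t + P'') / (Q' * t + Q'') := by
    rw [eq_div_iff hQpos.ne']; exact hinv
  have e1 : (x - P / Q) * (Q * (Q' * t + Q'')) = (t - 1) * (P' * Q'' - P'' * Q') := by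
    have hc1 : P / Q * Q = P := div_mul_cancel₀ _ hqR.ne'
    have hstep1 : (x - P / Q) * (Q * (Q' * t + Q'')) = (x * Q - P / Q * Q) * (Q' * t + Q'') := by
      ring
    rw [hstep1, hc1, hpR, hqRe]
    linear_combination (Q' + Q'') * hinv
  have e2 : (x - P'' / Q'') * (Q'' * (Q' * t + Q'')) = t * (P' * Q'' - P'' * Q') := by
    have hc2 : P'' / Q'' * Q'' = P'' := div_mul_cancel₀ _ hq''R.ne'
    have hstep2 : (x - P'' / Q'') * (Q'' * (Q' * t + Q'')) = (x * Q'' - P'' / Q'' * Q'') * (Q' * t + Q'') := by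
      ring
    rw [hstep2, hc2]
    linear_combination Q'' * hinv
  have key : (x - P / Q) * (x - P'' / Q'') * (Q * Q'' * (Q' * t + Q'')^2)
      = t * (t - 1) := by
    linear_combination ((x - P'' / Q'') * (Q'' * (Q' * t + Q''))) * e1 +
      ((t - 1) * (P' * Q'' - P'' * Q')) * e2 + (t * (t - 1)) * hdR
  have hCpos : (0:ℝ) < Q * Q'' * (Q' * t + Q'')^2 := by positivity
  have htneg : t * (t - 1) < 0 := by nlinarith
  by_contra h
  push_neg at h
  nlinarith [mul_nonneg h hCpos.le]
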